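/- Let J be an invertible n×n real matrix, f : ℝⁿ → ℝⁿ a continuous map, τ > 0, and b : ℝ → ℝⁿ continuous. If x : ℝ → ℝⁿ and c : ℝ → ℝⁿ satisfy τ ẋ = -x + f(J x + c) and τ ċ = -c + b, then v := J x + c satisfies τ v̇ = -v + J f(v) + b. -/

import Mathlib

/-- Miller–Fumarola equivalence: if x solves the rate model and c is a low-pass
filter of b, then v = Jx + c solves the voltage model. -/
theorem stmt3 {n : ℕ} (J : Matrix (Fin n) (Fin n) ℝ) (hJ : IsUnit J)
    (f : (Fin n → ℝ) → (Fin n → ℝ)) (hf : Continuous f)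
    (τ : ℝ) (hτ : 0 < τ) (b : ℝ → (Fin n → ℝ)) (hb : Continuous b)
    (x c : ℝ → (Fin n → ℝ))
    (hx : ∀ t, HasDerivAt x (τ⁻¹ • (-(x t) + f (J.mulVec (x t) + c t))) t)
    (hc : ∀ t, HasDerivAt c (τ⁻¹ • (-(c t) + b t)) t) :
    ∀ t, HasDerivAt (fun s => J.mulVec (x s) + c s)
      (τ⁻¹ • (-(J.mulVec (x t) + c t) + J.mulVec (f (J.mulVec (x t) + c t)) + b t)) t := by
  intro t
  set e : (Fin n → ℝ) →L[ℝ] (Fin n → ℝ) := (Matrix.mulVecLin J).toContinuousLinearMap with he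
  have h1 : HasDerivAt (fun s => J.mulVec (x s))
      (J.mulVec (τ⁻¹ • (-(x t) + f (J.mulVec (x t) + c t)))) t := by
    have := e.hasFDerivAt.comp_hasDerivAt t (hx t)
    convert this using 1 <;> rfl
  have h2 := h1.add (hc t)
  convert h2 using 1
  · rfl
  · rfl
  · rfl
  · rfl
  rw [Matrix.mulVec_smul, ← smul_add, Matrix.mulVec_add, Matrix.mulVec_neg]
  congr 1
  abel
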